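/- arXiv:1202.3651 — 3 statements merged into one kernel-verified Lean document; each statement's English description precedes it below -/
import Mathlib

section
/- Let N ≥ 1 and 1 ≤ k < N be integers, and let r_1,…,r_N be distinct real numbers. Consider the set V of families z : {1,…,N}^k → ℝ satisfying: (i) for every (j_2,…,j_k) ∈ {1,…,N}^{k−1} and every integer 0 ≤ m ≤ N−k−1, Σ_{j_1=1}^{N} z(j_1, j_2, …, j_k) · r_{j_1}^m = 0; and (ii) for every permutation σ ∈ S_k and every (j_1,…,j_k) ∈ {1,…,N}^k, z(j_{σ(1)},…,j_{σ(k)}) = sgn(σ) · z(j_1,…,j_k). Then V is a real vector subspace of dimension at most 1; equivalently, any two elements of V are linearly dependent (the solutions are determined up to a global multiplicative constant). -/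
open Finset in
lemma AR_vand_kill {N d : ℕ} (r : Fin N → ℝ) (hr : Function.Injective r)
    (x : Fin N → ℝ) (S : Finset (Fin N)) (hcard : S.card ≤ d)
    (hsupp : ∀ j, j ∉ S → x j = 0)
    (hmom : ∀ m, m < d → ∑ j, x j * r j ^ m = 0) :
    ∀ j, x j = 0 := by
  intro j0
  by_cases hj0 : j0 ∈ S
  · have hd1 : 1 ≤ d := le_trans (Finset.card_pos.mpr ⟨j0, hj0⟩) hcard
    set P := Lagrange.basis S r j0 with hP
    have hinj : Set.InjOn r S := fun a _ b _ h => hr h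
    have hdeg : P.natDegree < d := by
      rw [hP, Lagrange.natDegree_basis hinj hj0]
      omega
    have key : ∑ j, x j * P.eval (r j) = 0 := by
      have heval : ∀ j : Fin N, x j * P.eval (r j)
          = ∑ m ∈ Finset.range d, P.coeff m * (x j * r j ^ m) := by
        intro j
        rw [Polynomial.eval_eq_sum_range' hdeg, Finset.mul_sum]
        exact Finset.sum_congr rfl fun m _ => by ring
      rw [Finset.sum_congr rfl fun j _ => heval j, Finset.sum_comm]
      refine Finset.sum_eq_zero fun m hm => ?_
      rw [← Finset.mul_sum, hmom m (Finset.mem_range.mp hm), mul_zero]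
    have key2 : ∑ j, x j * P.eval (r j) = x j0 := by
      rw [Finset.sum_eq_single j0]
      · rw [hP, Lagrange.eval_basis_self hinj hj0, mul_one]
      · intro j _ hj
        by_cases hjS : j ∈ S
        · rw [hP, Lagrange.eval_basis_of_ne (Ne.symm hj) hjS, mul_zero]
        · rw [hsupp j hjS, zero_mul]
      · intro h; exact absurd (Finset.mem_univ j0) h
    rw [key] at key2; exact key2.symm
  · exact hsupp j0 hj0


lemma AR_core (N k : ℕ) (hk1 : 1 ≤ k) (hk2 : k < N)
    (r : Fin N → ℝ) (hr : Function.Injective r)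
    (z : (Fin k → Fin N) → ℝ)
    (hmom : ∀ (v : Fin k → Fin N) (m : ℕ), m < N - k →
      ∑ j1 : Fin N, z (Function.update v ⟨0, hk1⟩ j1) * r j1 ^ m = 0)
    (hanti : ∀ (σ : Equiv.Perm (Fin k)) (v : Fin k → Fin N),
      z (v ∘ σ) = ((Equiv.Perm.sign σ : ℤ) : ℝ) * z v)
    (hz0 : z (fun i => Fin.castLE hk2.le i) = 0) :
    ∀ v, z v = 0 := by
  set v₀ : Fin k → Fin N := fun i => Fin.castLE hk2.le i with hv₀
  have hv₀inj : Function.Injective v₀ := fun a b h => Fin.castLE_injective _ h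
  -- z vanishes on non-injective tuples
  have hrep : ∀ v : Fin k → Fin N, ¬ Function.Injective v → z v = 0 := by
    intro v hv
    simp only [Function.Injective, not_forall] at hv
    obtain ⟨a, b, hab, hne⟩ := hv
    have hcomp : v ∘ (Equiv.swap a b) = v := by
      funext t
      simp only [Function.comp_apply]
      rcases eq_or_ne t a with rfl | hta
      · rw [Equiv.swap_apply_left, hab]
      rcases eq_or_ne t b with rfl | htb
      · rw [Equiv.swap_apply_right, hab]
      · rw [Equiv.swap_apply_of_ne_of_ne hta htb]
    have := hanti (Equiv.swap a b) v
    rw [hcomp, Equiv.Perm.sign_swap hne] at this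
    push_cast at this
    linarith
  -- moment condition at every position
  have hmom' : ∀ (i : Fin k) (v : Fin k → Fin N) (m : ℕ), m < N - k →
      ∑ j : Fin N, z (Function.update v i j) * r j ^ m = 0 := by
    intro i v m hm
    set i0 : Fin k := ⟨0, hk1⟩
    set σ := Equiv.swap i0 i with hσ
    have hupd : ∀ j : Fin N,
        Function.update v i j = (Function.update (v ∘ σ) i0 j) ∘ σ := by
      intro j
      funext t
      simp only [Function.comp_apply, Function.update_apply]
      rcases eq_or_ne t i with rfl | hti
      · simp [hσ, Equiv.swap_apply_right]
      · have h1 : σ t ≠ i0 := by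
          intro h
          have : t = σ i0 := by
            have := congrArg σ h
            simpa [hσ] using this
          rw [hσ] at this
          simp [Equiv.swap_apply_left] at this
          exact hti this
        simp only [hti, if_false, h1, if_false, Function.comp_apply]
        have : σ (σ t) = t := Equiv.swap_apply_self _ _ _
        rw [this]
    have : ∑ j : Fin N, z (Function.update v i j) * r j ^ m
        = ((Equiv.Perm.sign σ : ℤ) : ℝ) * ∑ j : Fin N, z (Function.update (v ∘ σ) i0 j) * r j ^ m := by
      rw [Finset.mul_sum]
      refine Finset.sum_congr rfl fun j _ => ?_
      rw [hupd j, hanti σ]; ring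
    rw [this, hmom (v ∘ σ) m hm, mul_zero]
  -- the move lemma
  have hmove : ∀ (v : Fin k → Fin N), Function.Injective v → z v = 0 →
      ∀ (i : Fin k) (j' : Fin N), z (Function.update v i j') = 0 := by
    intro v hv hzv i j'
    have hcard : ((Finset.univ.image v)ᶜ : Finset (Fin N)).card ≤ N - k := by
      rw [Finset.card_compl, Finset.card_image_of_injective _ hv]
      simp
    refine AR_vand_kill r hr (fun j => z (Function.update v i j)) _ hcard ?_ (hmom' i v) j'
    intro j hj
    rw [Finset.notMem_compl, Finset.mem_image] at hj
    obtain ⟨t, -, ht⟩ := hj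
    rcases eq_or_ne t i with rfl | hti
    · rw [← ht]; simpa using hzv
    · apply hrep
      intro hinj
      apply hti
      apply hinj
      rw [Function.update_of_ne hti, Function.update_self, ht]
  -- main induction on distance to v₀
  have main : ∀ n (v : Fin k → Fin N), Function.Injective v →
      (Finset.univ.image v \ Finset.univ.image v₀).card = n → z v = 0 := by
    intro n
    induction n with
    | zero =>
      intro v hv hc
      have himg : Finset.univ.image v = Finset.univ.image v₀ := by
        have h1 : Finset.univ.image v ⊆ Finset.univ.image v₀ := by
          rw [← Finset.sdiff_eq_empty_iff_subset]
          exact Finset.card_eq_zero.mp hc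
        refine Finset.eq_of_subset_of_card_le h1 ?_
        rw [Finset.card_image_of_injective _ hv, Finset.card_image_of_injective _ hv₀inj]
      have hmem : ∀ i, ∃ t, v₀ t = v i := by
        intro i
        have : v i ∈ Finset.univ.image v₀ := himg ▸ Finset.mem_image_of_mem v (Finset.mem_univ i)
        obtain ⟨t, -, ht⟩ := Finset.mem_image.mp this
        exact ⟨t, ht⟩
      choose g hg using hmem
      have hginj : Function.Injective g := fun a b h => hv (by rw [← hg a, ← hg b, h])
      let σ := Equiv.ofBijective g (Finite.injective_iff_bijective.mp hginj)
      have hveq : v = v₀ ∘ σ := funext fun i => (hg i).symm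
      rw [hveq, hanti σ v₀, hz0, mul_zero]
    | succ n ih =>
      intro v hv hc
      have hpos : (Finset.univ.image v \ Finset.univ.image v₀).Nonempty := by
        rw [← Finset.card_pos, hc]; omega
      obtain ⟨y, hy⟩ := hpos
      rw [Finset.mem_sdiff] at hy
      obtain ⟨hy1, hy2⟩ := hy
      obtain ⟨i, -, hi⟩ := Finset.mem_image.mp hy1
      have hcards : (Finset.univ.image v₀).card = (Finset.univ.image v).card := by
        rw [Finset.card_image_of_injective _ hv, Finset.card_image_of_injective _ hv₀inj]
      have hpos2 : (Finset.univ.image v₀ \ Finset.univ.image v).Nonempty := by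
        rw [← Finset.card_pos, Finset.card_sdiff_comm hcards, hc]; omega
      obtain ⟨j', hj'⟩ := hpos2
      rw [Finset.mem_sdiff] at hj'
      obtain ⟨hj'1, hj'2⟩ := hj'
      set w := Function.update v i j' with hw
      have hwinj : Function.Injective w := by
        intro a b hab
        rw [hw] at hab
        by_cases ha : a = i <;> by_cases hb : b = i
        · rw [ha, hb]
        · exfalso
          rw [ha, Function.update_self, Function.update_of_ne hb] at hab
          exact hj'2 (by rw [hab]; exact Finset.mem_image_of_mem v (Finset.mem_univ b))
        · exfalso
          rw [hb, Function.update_self, Function.update_of_ne ha] at hab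
          exact hj'2 (by rw [← hab]; exact Finset.mem_image_of_mem v (Finset.mem_univ a))
        · rw [Function.update_of_ne ha, Function.update_of_ne hb] at hab
          exact hv hab
      have himgw : Finset.univ.image w \ Finset.univ.image v₀
          = (Finset.univ.image v \ Finset.univ.image v₀).erase y := by
        ext a
        simp only [Finset.mem_sdiff, Finset.mem_erase]
        constructor
        · rintro ⟨ha1, ha2⟩
          obtain ⟨t, -, ht⟩ := Finset.mem_image.mp ha1
          rcases eq_or_ne t i with rfl | hti
          · exfalso
            rw [hw, Function.update_self] at ht
            rw [← ht] at ha2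
            exact ha2 hj'1
          · rw [hw, Function.update_of_ne hti] at ht
            refine ⟨?_, Finset.mem_image.mpr ⟨t, Finset.mem_univ t, ht⟩, ha2⟩
            intro h
            rw [h, ← hi] at ht
            exact hti (hv ht)
        · rintro ⟨hay, ha1, ha2⟩
          obtain ⟨t, -, ht⟩ := Finset.mem_image.mp ha1
          have hti : t ≠ i := by
            intro h
            rw [h, hi] at ht
            exact hay ht.symm
          exact ⟨Finset.mem_image.mpr ⟨t, Finset.mem_univ t, by
            rw [hw, Function.update_of_ne hti]; exact ht⟩, ha2⟩
      have hcw : (Finset.univ.image w \ Finset.univ.image v₀).card = n := by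
        rw [himgw, Finset.card_erase_of_mem (Finset.mem_sdiff.mpr ⟨hy1, hy2⟩), hc]
        omega
      have hzw : z w = 0 := ih w hwinj hcw
      have : Function.update w i (v i) = v := by
        rw [hw, Function.update_idem, Function.update_eq_self]
      rw [← this]
      exact hmove w hwinj hzw i (v i)
  intro v
  by_cases hv : Function.Injective v
  · exact main _ v hv rfl
  · exact hrep v hv


/-- **Lemma (Ayyer–Romik).** Let `N ≥ 1`, `1 ≤ k < N`, and let `r_1,…,r_N` be
distinct reals. Any two families `z : {1,…,N}^k → ℝ` satisfying
(i) `Σ_{j₁} z(j₁,j₂,…,j_k) r_{j₁}^m = 0` for all `(j₂,…,j_k)` and `0 ≤ m ≤ N−k−1`, and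
(ii) antisymmetry under permutations of the indices,
are linearly dependent (the solutions are determined up to a global constant). -/
theorem linear_system_rank_one (N k : ℕ) (hN : 1 ≤ N) (hk1 : 1 ≤ k) (hk2 : k < N)
    (r : Fin N → ℝ) (hr : Function.Injective r)
    (z₁ z₂ : (Fin k → Fin N) → ℝ)
    (h₁mom : ∀ (v : Fin k → Fin N) (m : ℕ), m < N - k →
      ∑ j1 : Fin N, z₁ (Function.update v ⟨0, hk1⟩ j1) * r j1 ^ m = 0)
    (h₁anti : ∀ (σ : Equiv.Perm (Fin k)) (v : Fin k → Fin N),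
      z₁ (v ∘ σ) = ((Equiv.Perm.sign σ : ℤ) : ℝ) * z₁ v)
    (h₂mom : ∀ (v : Fin k → Fin N) (m : ℕ), m < N - k →
      ∑ j1 : Fin N, z₂ (Function.update v ⟨0, hk1⟩ j1) * r j1 ^ m = 0)
    (h₂anti : ∀ (σ : Equiv.Perm (Fin k)) (v : Fin k → Fin N),
      z₂ (v ∘ σ) = ((Equiv.Perm.sign σ : ℤ) : ℝ) * z₂ v) :
    ∃ a b : ℝ, (a ≠ 0 ∨ b ≠ 0) ∧ ∀ v : Fin k → Fin N, a * z₁ v + b * z₂ v = 0 := by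
  set v₀ : Fin k → Fin N := fun i => Fin.castLE hk2.le i with hv₀
  have key : ∀ a b : ℝ, a * z₁ v₀ + b * z₂ v₀ = 0 →
      ∀ v, a * z₁ v + b * z₂ v = 0 := by
    intro a b hab
    refine AR_core N k hk1 hk2 r hr (fun v => a * z₁ v + b * z₂ v) ?_ ?_ hab
    · intro v m hm
      have h1 := h₁mom v m hm
      have h2 := h₂mom v m hm
      have : ∑ j1 : Fin N, (a * z₁ (Function.update v ⟨0, hk1⟩ j1)
            + b * z₂ (Function.update v ⟨0, hk1⟩ j1)) * r j1 ^ m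
          = a * ∑ j1 : Fin N, z₁ (Function.update v ⟨0, hk1⟩ j1) * r j1 ^ m
          + b * ∑ j1 : Fin N, z₂ (Function.update v ⟨0, hk1⟩ j1) * r j1 ^ m := by
        rw [Finset.mul_sum, Finset.mul_sum, ← Finset.sum_add_distrib]
        exact Finset.sum_congr rfl fun j _ => by ring
      rw [this, h1, h2]
      ring
    · intro σ v
      rw [h₁anti σ v, h₂anti σ v]
      ring
  by_cases h1 : z₁ v₀ = 0
  · refine ⟨1, 0, Or.inl one_ne_zero, key 1 0 ?_⟩
    rw [h1]; ring
  · refine ⟨z₂ v₀, -z₁ v₀, Or.inr (neg_ne_zero.mpr h1), key _ _ (by ring)⟩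
end

section
/- Let n ≥ 1. Define rational numbers c_{n,m,k} for integers m ≥ 0 and k by c_{n,0,k} = A_{n,k}, and for m ≥ 1 by the recurrence c_{n,m,k} = (1/2)·( −2k·c_{n,m−1,k+1} + (n+4k−2m−2)·c_{n,m−1,k} + (5n−4k+2m+2)·c_{n,m−1,k−1} − 2(n−k+m+1)·c_{n,m−1,k−2} ). Then for every integer 0 ≤ m ≤ 2n−1 and every real u: f_n^{(m)}(u) = sin^{2n−1−m}(u) · Σ_{k=1}^{n+m} c_{n,m,k} · a(u)^{k−1} · b(u)^{n−k+m}. -/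
open Finset

/-- `M` is an alternating sign matrix: entries in `{-1,0,1}`, every row and column
sums to `1`, and the nonzero entries alternate in sign (equivalently, all prefix
sums of rows and columns lie in `{0,1}`). -/
def IsASM {n : ℕ} (M : Matrix (Fin n) (Fin n) ℤ) : Prop :=
  (∀ i j, M i j = -1 ∨ M i j = 0 ∨ M i j = 1) ∧
  (∀ i j : Fin n, (∑ k ∈ Finset.univ.filter (fun k => k ≤ j), M i k) = 0 ∨
                  (∑ k ∈ Finset.univ.filter (fun k => k ≤ j), M i k) = 1) ∧
  (∀ i : Fin n, (∑ k, M i k) = 1) ∧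
  (∀ j i : Fin n, (∑ k ∈ Finset.univ.filter (fun k => k ≤ i), M k j) = 0 ∨
                  (∑ k ∈ Finset.univ.filter (fun k => k ≤ i), M k j) = 1) ∧
  (∀ j : Fin n, (∑ k, M k j) = 1)

/-- `M` has a `1` entry at (1-indexed) row `r`, column `c`. -/
def HasOneAt {n : ℕ} (M : Matrix (Fin n) (Fin n) ℤ) (r c : ℤ) : Prop :=
  ∃ p q : Fin n, (p : ℤ) + 1 = r ∧ (q : ℤ) + 1 = c ∧ M p q = 1

/-- `A_n`: the total number of ASMs of order `n`. -/
noncomputable def Atot (n : ℕ) : ℕ :=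
  Set.ncard {M : Matrix (Fin n) (Fin n) ℤ | IsASM M}

/-- `A_{n,k}`: the number of ASMs of order `n` with a `1` at position `(1,k)`
(and `0` when `k < 1` or `k > n`). -/
noncomputable def Ank (n : ℕ) (k : ℤ) : ℕ :=
  Set.ncard {M : Matrix (Fin n) (Fin n) ℤ | IsASM M ∧ HasOneAt M 1 k}

/-- `A_n^{TL}(i,j)`: number of ASMs of order `n` with `m_{1,i} = m_{j,1} = 1`. -/
noncomputable def ATL (n i j : ℕ) : ℕ :=
  Set.ncard {M : Matrix (Fin n) (Fin n) ℤ |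
    IsASM M ∧ HasOneAt M 1 (i : ℤ) ∧ HasOneAt M (j : ℤ) 1}

/-- `A_n^{TLB}(i,j,k)`: number of ASMs of order `n` with `m_{1,i} = m_{j,1} = m_{n,k} = 1`. -/
noncomputable def ATLB (n i j k : ℕ) : ℕ :=
  Set.ncard {M : Matrix (Fin n) (Fin n) ℤ |
    IsASM M ∧ HasOneAt M 1 (i : ℤ) ∧ HasOneAt M (j : ℤ) 1 ∧ HasOneAt M (n : ℤ) (k : ℤ)}

/-- `A_n^{TLBR}(i,j,k,ℓ)`: number of ASMs of order `n` with
`m_{1,i} = m_{j,1} = m_{n,k} = m_{ℓ,n} = 1`. -/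
noncomputable def ATLBR (n i j k l : ℕ) : ℕ :=
  Set.ncard {M : Matrix (Fin n) (Fin n) ℤ |
    IsASM M ∧ HasOneAt M 1 (i : ℤ) ∧ HasOneAt M (j : ℤ) 1 ∧
      HasOneAt M (n : ℤ) (k : ℤ) ∧ HasOneAt M (l : ℤ) (n : ℤ)}

/-- `α_n(t) = Σ_{k=1}^n A_{n,k} t^{k-1}`. -/
noncomputable def alphaP (n : ℕ) (t : ℝ) : ℝ :=
  ∑ k ∈ Finset.Icc 1 n, (Ank n (k : ℤ) : ℝ) * t ^ (k - 1)

/-- `β_n(t) = Σ_{k=1}^{n-1} A_{n-1,k} t^k`. -/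
noncomputable def betaP (n : ℕ) (t : ℝ) : ℝ :=
  ∑ k ∈ Finset.Icc 1 (n - 1), (Ank (n - 1) (k : ℤ) : ℝ) * t ^ k

/-- The coefficient `g_{n,k}` appearing in `γ_n`. -/
noncomputable def gcoef (n : ℕ) (k : ℤ) : ℝ :=
  -2 * ((n : ℝ) - (k : ℝ) + 3) * (Ank (n - 1) (k - 3) : ℝ)
  + (5 * (n : ℝ) - 4 * (k : ℝ) + 6) * (Ank (n - 1) (k - 2) : ℝ)
  + ((n : ℝ) + 4 * (k : ℝ) - 6) * (Ank (n - 1) (k - 1) : ℝ)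
  - 2 * (k : ℝ) * (Ank (n - 1) k : ℝ)

/-- `γ_n(t) = Σ_{k=1}^{n+2} g_{n,k} t^{k-1}`. -/
noncomputable def gammaP (n : ℕ) (t : ℝ) : ℝ :=
  ∑ k ∈ Finset.Icc 1 (n + 2), gcoef n (k : ℤ) * t ^ (k - 1)

/-- The coefficient `d_{n,k}` appearing in `δ_n`. -/
noncomputable def dcoef (n : ℕ) (k : ℤ) : ℝ :=
  4 * ((n : ℝ) + 4 - (k : ℝ)) * ((n : ℝ) + 5 - (k : ℝ)) * (Ank (n - 1) (k - 5) : ℝ)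
  - 4 * ((n : ℝ) + 4 - (k : ℝ)) * (5 * (n : ℝ) + 11 - 4 * (k : ℝ)) * (Ank (n - 1) (k - 4) : ℝ)
  + (240 - 172 * (k : ℝ) + 32 * (k : ℝ) ^ 2 + 120 * (n : ℝ) - 52 * (k : ℝ) * (n : ℝ)
      + 21 * (n : ℝ) ^ 2) * (Ank (n - 1) (k - 3) : ℝ)
  - 2 * (80 - 80 * (k : ℝ) + 20 * (k : ℝ) ^ 2 + 42 * (n : ℝ) - 20 * (k : ℝ) * (n : ℝ)
      - 5 * (n : ℝ) ^ 2) * (Ank (n - 1) (k - 2) : ℝ)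
  + (64 - 84 * (k : ℝ) + 32 * (k : ℝ) ^ 2 - 4 * (n : ℝ) - 12 * (k : ℝ) * (n : ℝ)
      + (n : ℝ) ^ 2) * (Ank (n - 1) (k - 1) : ℝ)
  - 4 * (k : ℝ) * ((n : ℝ) - 5 + 4 * (k : ℝ)) * (Ank (n - 1) k : ℝ)
  + 4 * (k : ℝ) * ((k : ℝ) + 1) * (Ank (n - 1) (k + 1) : ℝ)

/-- `δ_n(t) = Σ_{k=1}^{n+3} d_{n,k} t^{k-1}`. -/
noncomputable def deltaP (n : ℕ) (t : ℝ) : ℝ :=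
  ∑ k ∈ Finset.Icc 1 (n + 3), dcoef n (k : ℤ) * t ^ (k - 1)

/-- `ρ_n = (1/(8 A_n² (2n−2))) ((n−2)!(3n−2)!/((2n−3)!(2n−1)!))²`. -/
noncomputable def rhoC (n : ℕ) : ℝ :=
  1 / (8 * (Atot n : ℝ) ^ 2 * (2 * (n : ℝ) - 2)) *
    ((Nat.factorial (n - 2) : ℝ) * (Nat.factorial (3 * n - 2) : ℝ) /
      ((Nat.factorial (2 * n - 3) : ℝ) * (Nat.factorial (2 * n - 1) : ℝ))) ^ 2

/-- `σ_n = (1/(64 A_n³ (2n−2)²(2n−3))) ((n−2)!(3n−2)!/((2n−3)!(2n−1)!))³`. -/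
noncomputable def sigmaC (n : ℕ) : ℝ :=
  1 / (64 * (Atot n : ℝ) ^ 3 * (2 * (n : ℝ) - 2) ^ 2 * (2 * (n : ℝ) - 3)) *
    ((Nat.factorial (n - 2) : ℝ) * (Nat.factorial (3 * n - 2) : ℝ) /
      ((Nat.factorial (2 * n - 3) : ℝ) * (Nat.factorial (2 * n - 1) : ℝ))) ^ 3

/-- `a(u) = (2/√3) sin(π/3 + u)`. -/
noncomputable def aw (u : ℝ) : ℝ := 2 / Real.sqrt 3 * Real.sin (Real.pi / 3 + u)

/-- `b(u) = (2/√3) sin(π/3 - u)`. -/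
noncomputable def bw (u : ℝ) : ℝ := 2 / Real.sqrt 3 * Real.sin (Real.pi / 3 - u)

/-- The weight `w(M)` of an ASM `M` with row spectral parameters `x` and column
spectral parameters `y`, at the combinatorial point `η = 2π/3`. -/
noncomputable def wtASM {n : ℕ} (M : Matrix (Fin n) (Fin n) ℤ) (x y : Fin n → ℝ) : ℝ :=
  ∏ i : Fin n, ∏ j : Fin n,
    if M i j ≠ 0 then 1
    else if (∑ k ∈ Finset.univ.filter (fun k => k < j), M i k)
            = (∑ k ∈ Finset.univ.filter (fun k => k < i), M k j)
      then aw (x i - y j) else bw (x i - y j)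

/-- The square ice (six-vertex) partition function with domain wall boundary
conditions at `η = 2π/3`, as a sum over ASMs of order `n`. -/
noncomputable def Zfn (n : ℕ) (x y : Fin n → ℝ) : ℝ :=
  ∑ᶠ M ∈ {M : Matrix (Fin n) (Fin n) ℤ | IsASM M}, wtASM M x y

/-- `f_n(u) = sin^{2n-1}(u) Σ_{k=1}^n A_{n,k} a(u)^{k-1} b(u)^{n-k}`. -/
noncomputable def fASM (n : ℕ) (u : ℝ) : ℝ :=
  Real.sin u ^ (2 * n - 1) *
    ∑ k ∈ Finset.Icc 1 n, (Ank n (k : ℤ) : ℝ) * aw u ^ (k - 1) * bw u ^ (n - k)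

/-- Generalized binomial coefficient `C(x,m) = x(x-1)⋯(x-m+1)/m!`. -/
noncomputable def genBinom (x : ℝ) (m : ℕ) : ℝ :=
  (∏ i ∈ Finset.range m, (x - (i : ℝ))) / (Nat.factorial m : ℝ)

/-- The coefficients `c_{n,m,k}`: `c_{n,0,k} = A_{n,k}`, and for `m ≥ 1`,
`c_{n,m,k} = ½(−2k c_{n,m−1,k+1} + (n+4k−2m−2) c_{n,m−1,k}
  + (5n−4k+2m+2) c_{n,m−1,k−1} − 2(n−k+m+1) c_{n,m−1,k−2})`. -/
noncomputable def ccoef (n : ℕ) : ℕ → ℤ → ℝ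
  | 0, k => (Ank n k : ℝ)
  | m + 1, k =>
      (1 / 2) * (-2 * (k : ℝ) * ccoef n m (k + 1)
        + ((n : ℝ) + 4 * (k : ℝ) - 2 * ((m : ℝ) + 1) - 2) * ccoef n m k
        + (5 * (n : ℝ) - 4 * (k : ℝ) + 2 * ((m : ℝ) + 1) + 2) * ccoef n m (k - 1)
        - 2 * ((n : ℝ) - (k : ℝ) + ((m : ℝ) + 1) + 1) * ccoef n m (k - 2))

lemma ank_eq_zero {n : ℕ} {k : ℤ} (h : k < 1 ∨ (n : ℤ) < k) : Ank n k = 0 := by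
  have : {M : Matrix (Fin n) (Fin n) ℤ | IsASM M ∧ HasOneAt M 1 k} = ∅ := by
    ext M
    simp only [Set.mem_setOf_eq, Set.mem_empty_iff_false, iff_false]
    rintro ⟨-, p, q, -, hq, -⟩
    have := q.isLt
    omega
  rw [Ank, this, Set.ncard_empty]

lemma ccoef_eq_zero (n : ℕ) :
    ∀ (m : ℕ) (k : ℤ), (k < 1 ∨ (n : ℤ) + m < k) → ccoef n m k = 0 := by
  intro m
  induction m with
  | zero =>
    intro k h
    have : Ank n k = 0 := ank_eq_zero (by push_cast at h; omega)
    simp [ccoef, this]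
  | succ m ih =>
    intro k h
    rw [ccoef]
    rcases h with h | h
    · by_cases hk0 : k = 0
      · subst hk0
        rw [ih 0 (Or.inl (by norm_num)), ih (0 - 1) (Or.inl (by norm_num)),
          ih (0 - 2) (Or.inl (by norm_num))]
        norm_num
      · rw [ih (k + 1) (Or.inl (by omega)), ih k (Or.inl (by omega)),
          ih (k - 1) (Or.inl (by omega)), ih (k - 2) (Or.inl (by omega))]
        ring
    · push_cast at h ⊢
      by_cases hk0 : k = (n : ℤ) + m + 2
      · subst hk0
        rw [ih (((n:ℤ)+m+2) + 1) (Or.inr (by omega)), ih ((n:ℤ)+m+2) (Or.inr (by omega)),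
          ih (((n:ℤ)+m+2) - 1) (Or.inr (by omega))]
        have : ((n:ℝ) - (((n : ℤ) + (m : ℤ) + 2 : ℤ) : ℝ) + ((m : ℝ) + 1) + 1) = 0 := by
          push_cast; ring
        rw [this]
        ring
      · rw [ih (k + 1) (Or.inr (by omega)), ih k (Or.inr (by omega)),
          ih (k - 1) (Or.inr (by omega)), ih (k - 2) (Or.inr (by omega))]
        ring

lemma sum_shift (a b c : ℕ) (f : ℕ → ℝ) :
    ∑ k ∈ Finset.Icc (a + c) (b + c), f k = ∑ k ∈ Finset.Icc a b, f (k + c) := by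
  rw [← Finset.map_add_right_Icc, Finset.sum_map]
  rfl

lemma drop_top (N : ℕ) (f : ℕ → ℝ) (h : f (N + 1) = 0) :
    ∑ k ∈ Finset.Icc 1 (N + 1), f k = ∑ k ∈ Finset.Icc 1 N, f k := by
  rw [← Finset.sum_subset (Finset.Icc_subset_Icc_right (Nat.le_succ N))]
  intro x hx hx'
  simp only [Finset.mem_Icc] at hx hx'
  have : x = N + 1 := by omega
  rw [this]; exact h

lemma drop_bot (a N : ℕ) (f : ℕ → ℝ) (h : ∀ x, x < a → f x = 0) :
    ∑ k ∈ Finset.Icc 0 N, f k = ∑ k ∈ Finset.Icc a N, f k := by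
  rw [Finset.sum_subset (Finset.Icc_subset_Icc_left (Nat.zero_le a))]
  intro x hx hx'
  simp only [Finset.mem_Icc] at hx hx'
  exact h x (by omega)

lemma sum_shift1 (b : ℕ) (f : ℕ → ℝ) :
    ∑ k ∈ Finset.Icc 1 (b + 1), f k = ∑ k ∈ Finset.Icc 0 b, f (k + 1) := by
  simpa using sum_shift 0 b 1 f

lemma sum_shift2 (b : ℕ) (f : ℕ → ℝ) :
    ∑ k ∈ Finset.Icc 3 (b + 2), f k = ∑ k ∈ Finset.Icc 1 b, f (k + 2) := by
  simpa using sum_shift 1 b 2 f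

lemma drop_top' (N : ℕ) (f : ℕ → ℝ) (h : f N = 0) (hN : 1 ≤ N) :
    ∑ k ∈ Finset.Icc 1 N, f k = ∑ k ∈ Finset.Icc 1 (N - 1), f k := by
  conv_lhs => rw [show N = (N - 1) + 1 by omega]
  exact drop_top _ f (by rwa [show N - 1 + 1 = N by omega])

lemma sum_shift1' (N : ℕ) (f : ℕ → ℝ) (hN : 1 ≤ N) :
    ∑ k ∈ Finset.Icc 1 N, f k = ∑ k ∈ Finset.Icc 0 (N - 1), f (k + 1) := by
  conv_lhs => rw [show N = (N - 1) + 1 by omega]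
  exact sum_shift1 _ f

lemma sum_shift2' (N : ℕ) (f : ℕ → ℝ) (hN : 1 ≤ N) :
    ∑ k ∈ Finset.Icc 3 (N + 1), f k = ∑ k ∈ Finset.Icc 1 (N - 1), f (k + 2) := by
  conv_lhs => rw [show N + 1 = (N - 1) + 2 by omega]
  exact sum_shift2 _ f

lemma sum_Icc_congr_zero (a b N : ℕ) (hab : a ≤ b) (f : ℕ → ℝ)
    (h : ∀ x, a ≤ x → x < b → f x = 0) :
    ∑ k ∈ Finset.Icc a N, f k = ∑ k ∈ Finset.Icc b N, f k := by
  rw [Finset.sum_subset (Finset.Icc_subset_Icc_left hab)]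
  intro x hx hx'
  simp only [Finset.mem_Icc] at hx hx'
  exact h x hx.1 (by omega)

lemma key_sum (n m : ℕ) (hn : 1 ≤ n) (A B : ℝ) :
    ∑ k ∈ Finset.Icc 1 (n + m),
      ccoef n m (k : ℤ) *
        ((-((n : ℝ) + (m : ℝ) - (k : ℝ))) * (A ^ (k + 1) * B ^ (n + m - 1 - k))
         + (((2 * (n : ℝ) - 1 - (m : ℝ)) - ((k : ℝ) - 1) + 3 * ((n : ℝ) + (m : ℝ) - (k : ℝ))) / 2)
             * (A ^ k * B ^ (n + m - k))
         + (((2 * (n : ℝ) - 1 - (m : ℝ)) + 3 * ((k : ℝ) - 1) - ((n : ℝ) + (m : ℝ) - (k : ℝ))) / 2)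
             * (A ^ (k - 1) * B ^ (n + m + 1 - k))
         + (-((k : ℝ) - 1)) * (A ^ (k - 1 - 1) * B ^ (n + m + 2 - k)))
    = ∑ k ∈ Finset.Icc 1 (n + m + 1), ccoef n (m + 1) (k : ℤ) * (A ^ (k - 1) * B ^ (n + m + 1 - k)) := by
  have hN1 : 1 ≤ n + m := by omega
  have c0 : ∀ k : ℤ, k < 1 ∨ (n : ℤ) + (m : ℤ) < k → ccoef n m k = 0 := by
    intro k hk
    exact ccoef_eq_zero n m k (by push_cast; omega)
  -- the four families on the right
  set r1 : ℕ → ℝ := fun k => (-(k : ℝ)) * ccoef n m ((k : ℤ) + 1) * (A ^ (k - 1) * B ^ (n + m + 1 - k)) with hr1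
  set r2 : ℕ → ℝ := fun k => (((n : ℝ) + 4 * (k : ℝ) - 2 * ((m : ℝ) + 1) - 2) / 2)
      * ccoef n m (k : ℤ) * (A ^ (k - 1) * B ^ (n + m + 1 - k)) with hr2
  set r3 : ℕ → ℝ := fun k => ((5 * (n : ℝ) - 4 * (k : ℝ) + 2 * ((m : ℝ) + 1) + 2) / 2)
      * ccoef n m ((k : ℤ) - 1) * (A ^ (k - 1) * B ^ (n + m + 1 - k)) with hr3
  set r4 : ℕ → ℝ := fun k => (-((n : ℝ) - (k : ℝ) + ((m : ℝ) + 1) + 1))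
      * ccoef n m ((k : ℤ) - 2) * (A ^ (k - 1) * B ^ (n + m + 1 - k)) with hr4
  -- the four families on the left
  set s1 : ℕ → ℝ := fun k => (-((n : ℝ) + (m : ℝ) - (k : ℝ))) * ccoef n m (k : ℤ)
      * (A ^ (k + 1) * B ^ (n + m - 1 - k)) with hs1
  set s2 : ℕ → ℝ := fun k => (((2 * (n : ℝ) - 1 - (m : ℝ)) - ((k : ℝ) - 1) + 3 * ((n : ℝ) + (m : ℝ) - (k : ℝ))) / 2)
      * ccoef n m (k : ℤ) * (A ^ k * B ^ (n + m - k)) with hs2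
  set s3 : ℕ → ℝ := fun k => (((2 * (n : ℝ) - 1 - (m : ℝ)) + 3 * ((k : ℝ) - 1) - ((n : ℝ) + (m : ℝ) - (k : ℝ))) / 2)
      * ccoef n m (k : ℤ) * (A ^ (k - 1) * B ^ (n + m + 1 - k)) with hs3
  set s4 : ℕ → ℝ := fun k => (-((k : ℝ) - 1)) * ccoef n m (k : ℤ)
      * (A ^ (k - 1 - 1) * B ^ (n + m + 2 - k)) with hs4
  have lsplit : ∀ k ∈ Finset.Icc 1 (n + m),
      ccoef n m (k : ℤ) *
        ((-((n : ℝ) + (m : ℝ) - (k : ℝ))) * (A ^ (k + 1) * B ^ (n + m - 1 - k))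
         + (((2 * (n : ℝ) - 1 - (m : ℝ)) - ((k : ℝ) - 1) + 3 * ((n : ℝ) + (m : ℝ) - (k : ℝ))) / 2)
             * (A ^ k * B ^ (n + m - k))
         + (((2 * (n : ℝ) - 1 - (m : ℝ)) + 3 * ((k : ℝ) - 1) - ((n : ℝ) + (m : ℝ) - (k : ℝ))) / 2)
             * (A ^ (k - 1) * B ^ (n + m + 1 - k))
         + (-((k : ℝ) - 1)) * (A ^ (k - 1 - 1) * B ^ (n + m + 2 - k)))
      = s1 k + s2 k + s3 k + s4 k := by
    intro k _
    simp only [hs1, hs2, hs3, hs4]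
    ring
  have rsplit : ∀ k ∈ Finset.Icc 1 (n + m + 1),
      ccoef n (m + 1) (k : ℤ) * (A ^ (k - 1) * B ^ (n + m + 1 - k))
      = r1 k + r2 k + r3 k + r4 k := by
    intro k _
    rw [ccoef]
    simp only [hr1, hr2, hr3, hr4]
    push_cast
    ring
  rw [Finset.sum_congr rfl lsplit, Finset.sum_congr rfl rsplit]
  rw [Finset.sum_add_distrib, Finset.sum_add_distrib, Finset.sum_add_distrib,
      Finset.sum_add_distrib, Finset.sum_add_distrib, Finset.sum_add_distrib]
  have Ea : ∑ k ∈ Finset.Icc 1 (n + m), s1 k = ∑ k ∈ Finset.Icc 1 (n + m + 1), r4 k := by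
    have step1 : ∑ k ∈ Finset.Icc 1 (n + m + 1), r4 k = ∑ k ∈ Finset.Icc 3 (n + m + 1), r4 k := by
      refine sum_Icc_congr_zero 1 3 _ (by norm_num) r4 ?_
      intro x hx1 hx3
      interval_cases x
      · simp only [hr4]
        rw [show ((1 : ℕ) : ℤ) - 2 = -1 by norm_num, c0 (-1) (by omega)]
        ring
      · simp only [hr4]
        rw [show ((2 : ℕ) : ℤ) - 2 = 0 by norm_num, c0 0 (by omega)]
        ring
    have step2 : ∑ k ∈ Finset.Icc 3 (n + m + 1), r4 k
        = ∑ k ∈ Finset.Icc 1 (n + m - 1), r4 (k + 2) := sum_shift2' _ _ hN1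
    have step3 : ∑ k ∈ Finset.Icc 1 (n + m), s1 k = ∑ k ∈ Finset.Icc 1 (n + m - 1), s1 k := by
      refine drop_top' _ s1 ?_ hN1
      simp only [hs1]
      push_cast
      ring
    rw [step1, step2, step3]
    refine Finset.sum_congr rfl ?_
    intro k hk
    simp only [Finset.mem_Icc] at hk
    simp only [hs1, hr4]
    have e1 : ((k + 2 : ℕ) : ℤ) - 2 = (k : ℤ) := by push_cast; ring
    have e2 : (k + 2) - 1 = k + 1 := by omega
    have e3 : n + m + 1 - (k + 2) = n + m - 1 - k := by omega
    rw [e1, e2, e3]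
    push_cast
    ring
  have Eb : ∑ k ∈ Finset.Icc 1 (n + m), s2 k = ∑ k ∈ Finset.Icc 1 (n + m + 1), r3 k := by
    have step1 : ∑ k ∈ Finset.Icc 1 (n + m + 1), r3 k = ∑ k ∈ Finset.Icc 0 (n + m), r3 (k + 1) :=
      sum_shift1 _ _
    have step2 : ∑ k ∈ Finset.Icc 0 (n + m), r3 (k + 1) = ∑ k ∈ Finset.Icc 1 (n + m), r3 (k + 1) := by
      refine sum_Icc_congr_zero 0 1 _ (by norm_num) _ ?_
      intro x _ hx1
      interval_cases x
      simp only [hr3]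
      rw [show ((0 + 1 : ℕ) : ℤ) - 1 = 0 by norm_num, c0 0 (by omega)]
      ring
    rw [step1, step2]
    refine Finset.sum_congr rfl ?_
    intro k hk
    simp only [Finset.mem_Icc] at hk
    simp only [hs2, hr3]
    have e1 : ((k + 1 : ℕ) : ℤ) - 1 = (k : ℤ) := by push_cast; ring
    have e2 : (k + 1) - 1 = k := by omega
    have e3 : n + m + 1 - (k + 1) = n + m - k := by omega
    rw [e1, e2, e3]
    push_cast
    ring
  have Ec : ∑ k ∈ Finset.Icc 1 (n + m), s3 k = ∑ k ∈ Finset.Icc 1 (n + m + 1), r2 k := by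
    rw [drop_top]
    · refine Finset.sum_congr rfl ?_
      intro k hk
      simp only [hs3, hr2]
      ring
    · simp only [hr2]
      rw [c0 ((n + m + 1 : ℕ) : ℤ) (by push_cast; omega)]
      ring
  have Ed : ∑ k ∈ Finset.Icc 1 (n + m), s4 k = ∑ k ∈ Finset.Icc 1 (n + m + 1), r1 k := by
    have step1 : ∑ k ∈ Finset.Icc 1 (n + m + 1), r1 k = ∑ k ∈ Finset.Icc 1 (n + m), r1 k := by
      rw [drop_top]
      simp only [hr1]
      rw [show ((n + m + 1 : ℕ) : ℤ) + 1 = ((n : ℤ) + m + 2) by push_cast; ring,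
        c0 _ (by omega)]
      ring
    have step2 : ∑ k ∈ Finset.Icc 1 (n + m), r1 k = ∑ k ∈ Finset.Icc 1 (n + m - 1), r1 k := by
      refine drop_top' _ r1 ?_ hN1
      simp only [hr1]
      rw [show ((n + m : ℕ) : ℤ) + 1 = ((n : ℤ) + m + 1) by push_cast; ring, c0 _ (by omega)]
      ring
    have step3 : ∑ k ∈ Finset.Icc 1 (n + m), s4 k = ∑ k ∈ Finset.Icc 0 (n + m - 1), s4 (k + 1) :=
      sum_shift1' _ s4 hN1
    have step4 : ∑ k ∈ Finset.Icc 0 (n + m - 1), s4 (k + 1) = ∑ k ∈ Finset.Icc 1 (n + m - 1), s4 (k + 1) := by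
      refine sum_Icc_congr_zero 0 1 _ (by norm_num) _ ?_
      intro x _ hx1
      interval_cases x
      simp only [hs4]
      norm_num
    rw [step1, step2, step3, step4]
    refine Finset.sum_congr rfl ?_
    intro k hk
    simp only [Finset.mem_Icc] at hk
    simp only [hs4, hr1]
    have e1 : ((k + 1 : ℕ) : ℤ) = (k : ℤ) + 1 := by push_cast; ring
    have e2 : (k + 1) - 1 - 1 = k - 1 := by omega
    have e3 : n + m + 2 - (k + 1) = n + m + 1 - k := by omega
    rw [e1, e2, e3]
    push_cast
    ring
  rw [Ea, Eb, Ec, Ed]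
  ring

lemma sqrt3_pos : (0:ℝ) < Real.sqrt 3 := Real.sqrt_pos.mpr (by norm_num)
lemma sqrt3_sq : Real.sqrt 3 ^ 2 = 3 := Real.sq_sqrt (by norm_num)
lemma sqrt3_cube : Real.sqrt 3 ^ 3 = 3 * Real.sqrt 3 := by
  rw [pow_succ, sqrt3_sq]

lemma hasDerivAt_aw (u : ℝ) :
    HasDerivAt aw (2 / Real.sqrt 3 * Real.cos (Real.pi / 3 + u)) u := by
  have h : HasDerivAt (fun u : ℝ => Real.sin (Real.pi / 3 + u))
      (Real.cos (Real.pi / 3 + u)) u := by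
    simpa [Function.comp_def] using (Real.hasDerivAt_sin (Real.pi / 3 + u)).comp u
      ((hasDerivAt_id u).const_add (Real.pi / 3))
  exact HasDerivAt.const_mul _ h

lemma hasDerivAt_bw (u : ℝ) :
    HasDerivAt bw (-(2 / Real.sqrt 3 * Real.cos (Real.pi / 3 - u))) u := by
  have h0 : HasDerivAt (fun u : ℝ => Real.pi / 3 - u) (-1) u := by
    exact (hasDerivAt_id' u).const_sub (Real.pi / 3)
  have h : HasDerivAt (fun u : ℝ => Real.sin (Real.pi / 3 - u))
      (Real.cos (Real.pi / 3 - u) * (-1)) u :=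
    (Real.hasDerivAt_sin (Real.pi / 3 - u)).comp u h0
  have := HasDerivAt.const_mul (2 / Real.sqrt 3) h
  exact this.congr_deriv (by ring)

lemma cos_eq_awbw (u : ℝ) : Real.cos u = (aw u + bw u) / 2 := by
  unfold aw bw
  rw [Real.sin_add, Real.sin_sub, Real.sin_pi_div_three, Real.cos_pi_div_three]
  have h0 := sqrt3_pos.ne'
  field_simp
  ring

lemma sin_mul_awderiv (u : ℝ) :
    Real.sin u * (2 / Real.sqrt 3 * Real.cos (Real.pi / 3 + u)) =
      (aw u - bw u) * (2 * bw u - aw u) / 2 := by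
  unfold aw bw
  rw [Real.sin_add, Real.sin_sub, Real.cos_add, Real.sin_pi_div_three, Real.cos_pi_div_three]
  have h0 := sqrt3_pos.ne'
  field_simp
  ring_nf
  rw [sqrt3_sq]
  ring

lemma sin_mul_bwderiv (u : ℝ) :
    Real.sin u * (-(2 / Real.sqrt 3 * Real.cos (Real.pi / 3 - u))) =
      -((aw u - bw u) * (2 * aw u - bw u) / 2) := by
  unfold aw bw
  rw [Real.sin_add, Real.sin_sub, Real.cos_sub, Real.sin_pi_div_three, Real.cos_pi_div_three]
  have h0 := sqrt3_pos.ne'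
  field_simp
  ring_nf
  rw [sqrt3_sq]
  ring


lemma termQ (A B p' : ℝ) (N k : ℕ) (hk1 : 1 ≤ k) (hkN : k ≤ N) :
    p' * ((A + B)/2) * A^(k-1) * B^(N-k)
      + ((k:ℝ) - 1) * A^(k-1-1) * ((A - B)*(2*B - A)/2) * B^(N-k)
      + ((N:ℝ) - (k:ℝ)) * B^(N-k-1) * (-((A - B)*(2*A - B)/2)) * A^(k-1)
    = (-((N:ℝ) - (k:ℝ))) * (A^(k+1) * B^(N-1-k))
      + ((p' - ((k:ℝ)-1) + 3*((N:ℝ)-(k:ℝ)))/2) * (A^k * B^(N-k))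
      + ((p' + 3*((k:ℝ)-1) - ((N:ℝ)-(k:ℝ)))/2) * (A^(k-1) * B^(N+1-k))
      + (-((k:ℝ)-1)) * (A^(k-1-1) * B^(N+2-k)) := by
  obtain ⟨j, rfl⟩ : ∃ j, k = j + 1 := ⟨k - 1, by omega⟩
  obtain ⟨l, rfl⟩ : ∃ l, N = j + 1 + l := ⟨N - (j + 1), by omega⟩
  have e1 : j + 1 - 1 = j := by omega
  have e2 : j + 1 + l - (j + 1) = l := by omega
  have e3 : j + 1 + l - (j + 1) - 1 = l - 1 := by omega
  have e4 : j + 1 + l - 1 - (j + 1) = l - 1 := by omega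
  have e5 : j + 1 + l + 1 - (j + 1) = l + 1 := by omega
  have e6 : j + 1 + l + 2 - (j + 1) = l + 2 := by omega
  simp only [e1, e2, e3, e4, e5, e6]
  cases j with
  | zero =>
    cases l with
    | zero => push_cast; ring
    | succ l' => push_cast; ring
  | succ j' =>
    cases l with
    | zero => push_cast; ring
    | succ l' => push_cast; ring

lemma hasDerivAt_F (n m : ℕ) (hn : 1 ≤ n) (hm : m + 1 ≤ 2 * n - 1) (u : ℝ) :
    HasDerivAt (fun v => Real.sin v ^ (2 * n - 1 - m) *
        ∑ k ∈ Finset.Icc 1 (n + m), ccoef n m (k : ℤ) * aw v ^ (k - 1) * bw v ^ (n + m - k))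
      (Real.sin u ^ (2 * n - 1 - (m + 1)) *
        ∑ k ∈ Finset.Icc 1 (n + (m + 1)),
          ccoef n (m + 1) (k : ℤ) * aw u ^ (k - 1) * bw u ^ (n + (m + 1) - k)) u := by
  have hS : HasDerivAt (fun v => Real.sin v ^ (2 * n - 1 - m))
      (↑(2 * n - 1 - m) * Real.sin u ^ (2 * n - 1 - m - 1) * Real.cos u) u :=
    (Real.hasDerivAt_sin u).pow _
  have hG : HasDerivAt (fun v => ∑ k ∈ Finset.Icc 1 (n + m),
        ccoef n m (k : ℤ) * aw v ^ (k - 1) * bw v ^ (n + m - k))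
      (∑ k ∈ Finset.Icc 1 (n + m),
        (ccoef n m (k : ℤ) * (↑(k - 1) * aw u ^ (k - 1 - 1)
            * (2 / Real.sqrt 3 * Real.cos (Real.pi / 3 + u))) * bw u ^ (n + m - k)
         + ccoef n m (k : ℤ) * aw u ^ (k - 1)
            * (↑(n + m - k) * bw u ^ (n + m - k - 1)
               * (-(2 / Real.sqrt 3 * Real.cos (Real.pi / 3 - u)))))) u := by
    refine HasDerivAt.fun_sum ?_
    intro k hk
    have hA := (hasDerivAt_aw u).pow (k - 1)
    have hB := (hasDerivAt_bw u).pow (n + m - k)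
    exact (HasDerivAt.const_mul (ccoef n m (k : ℤ)) hA).mul hB
  have h := hS.mul hG
  refine h.congr_deriv ?_
  symm
  have hpow : Real.sin u ^ (2 * n - 1 - m)
      = Real.sin u ^ (2 * n - 1 - m - 1) * Real.sin u := by
    rw [← pow_succ]
    congr 1
    omega
  have hpe : 2 * n - 1 - (m + 1) = 2 * n - 1 - m - 1 := by omega
  rw [hpow, hpe, show n + (m + 1) = n + m + 1 by omega]
  have hp : ((2 * n - 1 - m : ℕ) : ℝ) = 2 * (n : ℝ) - 1 - (m : ℝ) := by
    rw [Nat.cast_sub (by omega), Nat.cast_sub (by omega)]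
    push_cast
    ring
  have inner :
      ((2 * n - 1 - m : ℕ) : ℝ) * Real.cos u *
        (∑ k ∈ Finset.Icc 1 (n + m), ccoef n m (k : ℤ) * aw u ^ (k - 1) * bw u ^ (n + m - k))
      + Real.sin u *
        (∑ k ∈ Finset.Icc 1 (n + m),
          (ccoef n m (k : ℤ) * (↑(k - 1) * aw u ^ (k - 1 - 1)
              * (2 / Real.sqrt 3 * Real.cos (Real.pi / 3 + u))) * bw u ^ (n + m - k)
           + ccoef n m (k : ℤ) * aw u ^ (k - 1)
              * (↑(n + m - k) * bw u ^ (n + m - k - 1)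
                 * (-(2 / Real.sqrt 3 * Real.cos (Real.pi / 3 - u))))))
      = ∑ k ∈ Finset.Icc 1 (n + m + 1),
          ccoef n (m + 1) (k : ℤ) * aw u ^ (k - 1) * bw u ^ (n + m + 1 - k) := by
    rw [Finset.mul_sum, Finset.mul_sum, ← Finset.sum_add_distrib]
    have step : ∀ k ∈ Finset.Icc 1 (n + m),
        ((2 * n - 1 - m : ℕ) : ℝ) * Real.cos u *
            (ccoef n m (k : ℤ) * aw u ^ (k - 1) * bw u ^ (n + m - k))
          + Real.sin u *
            (ccoef n m (k : ℤ) * (↑(k - 1) * aw u ^ (k - 1 - 1)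
                * (2 / Real.sqrt 3 * Real.cos (Real.pi / 3 + u))) * bw u ^ (n + m - k)
             + ccoef n m (k : ℤ) * aw u ^ (k - 1)
                * (↑(n + m - k) * bw u ^ (n + m - k - 1)
                   * (-(2 / Real.sqrt 3 * Real.cos (Real.pi / 3 - u)))))
        = ccoef n m (k : ℤ) *
            ((-((n : ℝ) + (m : ℝ) - (k : ℝ))) * (aw u ^ (k + 1) * bw u ^ (n + m - 1 - k))
             + (((2 * (n : ℝ) - 1 - (m : ℝ)) - ((k : ℝ) - 1) + 3 * ((n : ℝ) + (m : ℝ) - (k : ℝ))) / 2)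
                 * (aw u ^ k * bw u ^ (n + m - k))
             + (((2 * (n : ℝ) - 1 - (m : ℝ)) + 3 * ((k : ℝ) - 1) - ((n : ℝ) + (m : ℝ) - (k : ℝ))) / 2)
                 * (aw u ^ (k - 1) * bw u ^ (n + m + 1 - k))
             + (-((k : ℝ) - 1)) * (aw u ^ (k - 1 - 1) * bw u ^ (n + m + 2 - k))) := by
      intro k hk
      simp only [Finset.mem_Icc] at hk
      have hq := termQ (aw u) (bw u) (2 * (n : ℝ) - 1 - (m : ℝ)) (n + m) k hk.1 hk.2
      have h1 := sin_mul_awderiv u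
      have h2 := sin_mul_bwderiv u
      have hc1 : ((k - 1 : ℕ) : ℝ) = (k : ℝ) - 1 := by
        rw [Nat.cast_sub hk.1]; norm_num
      have hc2 : ((n + m - k : ℕ) : ℝ) = (n : ℝ) + (m : ℝ) - (k : ℝ) := by
        rw [Nat.cast_sub hk.2]; push_cast; ring
      rw [hp, hc1, hc2, cos_eq_awbw]
      push_cast at hq
      linear_combination (ccoef n m (k : ℤ)) * hq
        + (((k : ℝ) - 1) * aw u ^ (k - 1 - 1) * bw u ^ (n + m - k) * ccoef n m (k : ℤ)) * h1
        + (((n : ℝ) + (m : ℝ) - (k : ℝ)) * bw u ^ (n + m - k - 1) * aw u ^ (k - 1)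
            * ccoef n m (k : ℤ)) * h2
    rw [Finset.sum_congr rfl step, key_sum n m hn (aw u) (bw u)]
    exact Finset.sum_congr rfl fun k _ => by ring
  rw [← inner]
  ring

/-- **Proposition (Ayyer–Romik).** For `0 ≤ m ≤ 2n−1` and real `u`:
`f_n^{(m)}(u) = sin^{2n−1−m}(u) Σ_{k=1}^{n+m} c_{n,m,k} a(u)^{k−1} b(u)^{n−k+m}`. -/
theorem fn_derivative_expansion (n : ℕ) (hn : 1 ≤ n) (m : ℕ) (hm : m ≤ 2 * n - 1)
    (u : ℝ) :
    iteratedDeriv m (fASM n) u =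
      Real.sin u ^ (2 * n - 1 - m) *
        ∑ k ∈ Finset.Icc 1 (n + m),
          ccoef n m (k : ℤ) * aw u ^ (k - 1) * bw u ^ (n + m - k) := by
  induction m generalizing u with
  | zero => simp [fASM, ccoef]
  | succ m ih =>
    rw [iteratedDeriv_succ]
    have hfun : iteratedDeriv m (fASM n)
        = fun v => Real.sin v ^ (2 * n - 1 - m) *
            ∑ k ∈ Finset.Icc 1 (n + m), ccoef n m (k : ℤ) * aw v ^ (k - 1) * bw v ^ (n + m - k) :=
      funext fun v => ih (by omega) v
    rw [hfun]
    exact (hasDerivAt_F n m hn hm u).deriv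
end

section
/- Let n ≥ 1 and let u be real. Then the partition function with a single nonzero spectral parameter attached to the first row satisfies the first-row expansion: Z_n(u, 0, …, 0; 0, …, 0) = Σ_{k=1}^{n} A_{n,k} · a(u)^{k−1} · b(u)^{n−k}, where x_1 = u and all other row and column parameters are 0. -/
open Finset

private lemma aw_zero : aw 0 = 1 := by
  have h3 : Real.sqrt 3 ≠ 0 := by positivity
  simp only [aw, add_zero, Real.sin_pi_div_three]
  field_simp

private lemma bw_zero : bw 0 = 1 := by
  have h3 : Real.sqrt 3 ≠ 0 := by positivity
  simp only [bw, sub_zero, Real.sin_pi_div_three]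
  field_simp

private lemma row0_cases {m : ℕ} {M : Matrix (Fin (m+1)) (Fin (m+1)) ℤ} (hM : IsASM M)
    (j : Fin (m+1)) : M 0 j = 0 ∨ M 0 j = 1 := by
  have h := hM.2.2.2.1 j 0
  have he : (Finset.univ.filter (fun k => k ≤ (0 : Fin (m+1)))) = {0} := by
    ext k; simp [Fin.le_zero_iff]
  rw [he, Finset.sum_singleton] at h
  exact h

private lemma row0_unique {m : ℕ} {M : Matrix (Fin (m+1)) (Fin (m+1)) ℤ} (hM : IsASM M) :
    ∃ q : Fin (m+1), M 0 q = 1 ∧ ∀ j, j ≠ q → M 0 j = 0 := by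
  have hsum := hM.2.2.1 0
  have hb : ∀ j, M 0 j = 0 ∨ M 0 j = 1 := row0_cases hM
  have key : (∑ j, M 0 j) = ∑ j, (if M 0 j = 1 then (1:ℤ) else 0) :=
    Finset.sum_congr rfl (fun j _ => by rcases hb j with h|h <;> simp [h])
  rw [hsum, Finset.sum_boole] at key
  have hcard : (Finset.univ.filter (fun j => M 0 j = 1)).card = 1 := by exact_mod_cast key.symm
  obtain ⟨q, hq⟩ := Finset.card_eq_one.mp hcard
  refine ⟨q, ?_, ?_⟩
  · have : q ∈ Finset.univ.filter (fun j => M 0 j = 1) := by rw [hq]; exact Finset.mem_singleton_self q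
    exact (Finset.mem_filter.mp this).2
  · intro j hj
    rcases hb j with h | h
    · exact h
    · exfalso
      have : j ∈ Finset.univ.filter (fun j => M 0 j = 1) := by
        simp [h]
      rw [hq, Finset.mem_singleton] at this
      exact hj this

private lemma wt_row {m : ℕ} {M : Matrix (Fin (m+1)) (Fin (m+1)) ℤ} (hM : IsASM M)
    {q : Fin (m+1)} (hq : M 0 q = 1) (hq0 : ∀ j, j ≠ q → M 0 j = 0) (u : ℝ) :
    wtASM M (fun i => if (i : ℕ) = 0 then u else 0) (fun _ => 0)
      = aw u ^ (q : ℕ) * bw u ^ (m - (q : ℕ)) := by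
  rw [wtASM, Fin.prod_univ_succ]
  have hrest : (∏ i : Fin m, ∏ j : Fin (m+1),
      if M i.succ j ≠ 0 then (1:ℝ)
      else if (∑ k ∈ Finset.univ.filter (fun k => k < j), M i.succ k)
              = (∑ k ∈ Finset.univ.filter (fun k => k < i.succ), M k j)
        then aw ((if ((i.succ : Fin (m+1)) : ℕ) = 0 then u else 0) - 0)
        else bw ((if ((i.succ : Fin (m+1)) : ℕ) = 0 then u else 0) - 0)) = 1 := by
    apply Finset.prod_eq_one
    intro i _
    apply Finset.prod_eq_one
    intro j _
    have hv : ((i.succ : Fin (m+1)) : ℕ) = (i : ℕ) + 1 := Fin.val_succ i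
    rw [hv]
    simp only [Nat.succ_ne_zero, if_false, zero_sub, neg_zero, sub_zero]
    split_ifs <;> simp [aw_zero, bw_zero]
  rw [hrest, mul_one]
  -- now the first-row product
  have hlt0 : (Finset.univ.filter (fun k : Fin (m+1) => k < (0 : Fin (m+1)))) = ∅ := by
    ext k; simp
  have hpre : ∀ j : Fin (m+1), (∑ k ∈ Finset.univ.filter (fun k => k < j), M 0 k)
      = if q < j then 1 else 0 := by
    intro j
    by_cases h : q < j
    · rw [if_pos h]
      rw [Finset.sum_eq_single_of_mem q (by simp [h])]
      · exact hq
      · intro b _ hb; exact hq0 b hb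
    · rw [if_neg h]
      apply Finset.sum_eq_zero
      intro k hk
      simp only [Finset.mem_filter, Finset.mem_univ, true_and] at hk
      apply hq0
      intro he
      exact h (he ▸ hk)
  have hfac : ∀ j : Fin (m+1),
      (if M 0 j ≠ 0 then (1:ℝ)
       else if (∑ k ∈ Finset.univ.filter (fun k => k < j), M 0 k)
               = (∑ k ∈ Finset.univ.filter (fun k => k < (0 : Fin (m+1))), M k j)
         then aw ((if ((0 : Fin (m+1)) : ℕ) = 0 then u else 0) - 0)
         else bw ((if ((0 : Fin (m+1)) : ℕ) = 0 then u else 0) - 0))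
      = (if (j : ℕ) < (q : ℕ) then aw u else if (j : ℕ) = (q : ℕ) then 1 else bw u) := by
    intro j
    have hx : ((if ((0 : Fin (m+1)) : ℕ) = 0 then u else 0) - 0) = u := by simp
    rw [hx, hlt0, Finset.sum_empty, hpre j]
    rcases lt_trichotomy (j : ℕ) (q : ℕ) with h | h | h
    · have hjq : j ≠ q := fun he => by simp [he] at h
      have hM0 : M 0 j = 0 := hq0 j hjq
      have hql : ¬ q < j := by
        intro hc; exact absurd (Fin.lt_iff_val_lt_val.mp hc) (by omega)
      simp [hM0, hql, h]
    · have hjq : j = q := Fin.ext h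
      subst hjq
      simp [hq]
    · have hjq : j ≠ q := fun he => by simp [he] at h
      have hM0 : M 0 j = 0 := hq0 j hjq
      have hql : q < j := Fin.lt_iff_val_lt_val.mpr h
      have : ¬ (j : ℕ) < (q : ℕ) := by omega
      simp [hM0, hql, this, h.ne']
  rw [Finset.prod_congr rfl (fun j _ => hfac j)]
  rw [Fin.prod_univ_eq_prod_range (fun j => if j < (q:ℕ) then aw u else if j = (q:ℕ) then 1 else bw u) (m+1)]
  have hqm : (q : ℕ) ≤ m := Nat.lt_succ_iff.mp q.isLt
  rw [Finset.range_eq_Ico, ← Finset.prod_Ico_consecutive _ (Nat.zero_le (q:ℕ)) (by omega : (q:ℕ) ≤ m + 1)]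
  have h1 : (∏ j ∈ Finset.Ico 0 (q:ℕ), if j < (q:ℕ) then aw u else if j = (q:ℕ) then 1 else bw u)
      = aw u ^ (q : ℕ) := by
    have hc : ∀ j ∈ Finset.Ico 0 (q:ℕ),
        (if j < (q:ℕ) then aw u else if j = (q:ℕ) then 1 else bw u) = aw u := by
      intro j hj
      rw [Finset.mem_Ico] at hj
      rw [if_pos hj.2]
    rw [Finset.prod_congr rfl hc, Finset.prod_const, Nat.card_Ico, Nat.sub_zero]
  have h2 : (∏ j ∈ Finset.Ico (q:ℕ) (m+1), if j < (q:ℕ) then aw u else if j = (q:ℕ) then 1 else bw u)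
      = bw u ^ (m - (q : ℕ)) := by
    rw [Finset.prod_eq_prod_Ico_succ_bot (by omega : (q:ℕ) < m + 1)]
    rw [if_neg (lt_irrefl _), if_pos rfl, one_mul]
    have hc : ∀ j ∈ Finset.Ico ((q:ℕ)+1) (m+1),
        (if j < (q:ℕ) then aw u else if j = (q:ℕ) then 1 else bw u) = bw u := by
      intro j hj
      rw [Finset.mem_Ico] at hj
      rw [if_neg (by omega), if_neg (by omega)]
    rw [Finset.prod_congr rfl hc, Finset.prod_const, Nat.card_Ico]
    congr 1
    omega
  rw [h1, h2]

/-- **First-row expansion of the partition function.** For `n ≥ 1` and real `u`,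
with `x_1 = u` and all other spectral parameters `0`:
`Z_n(u,0,…,0;0,…,0) = Σ_{k=1}^n A_{n,k} a(u)^{k−1} b(u)^{n−k}`. -/
theorem first_row_expansion (n : ℕ) (hn : 1 ≤ n) (u : ℝ) :
    Zfn n (fun i => if (i : ℕ) = 0 then u else 0) (fun _ => 0)
    = ∑ k ∈ Finset.Icc 1 n, (Ank n (k : ℤ) : ℝ) * aw u ^ (k - 1) * bw u ^ (n - k) := by
  obtain ⟨m, rfl⟩ : ∃ m, n = m + 1 := ⟨n - 1, by omega⟩
  classical
  have hS : {M : Matrix (Fin (m+1)) (Fin (m+1)) ℤ | IsASM M}.Finite := by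
    have hfin : (Set.pi (Set.univ : Set (Fin (m+1)))
        (fun _ => Set.pi (Set.univ : Set (Fin (m+1))) (fun _ => ({-1,0,1} : Set ℤ)))).Finite :=
      Set.Finite.pi (fun _ => Set.Finite.pi (fun _ =>
        ((Set.finite_singleton _).insert _).insert _))
    apply hfin.subset
    intro M hM
    rw [Set.mem_pi]
    intro i _
    rw [Set.mem_pi]
    intro j _
    rcases hM.1 i j with h | h | h <;> simp [h]
  rw [Zfn, finsum_mem_eq_finite_toFinset_sum _ hS]
  set x : Fin (m+1) → ℝ := (fun i => if (i : ℕ) = 0 then u else 0) with hx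
  set F := hS.toFinset with hF
  have hmemF : ∀ M, M ∈ F ↔ IsASM M := fun M => by
    rw [hF, Set.Finite.mem_toFinset]; rfl
  have hcover : F = Finset.univ.biUnion (fun q : Fin (m+1) => F.filter (fun M => M 0 q = 1)) := by
    ext M
    simp only [Finset.mem_biUnion, Finset.mem_filter, Finset.mem_univ, true_and]
    constructor
    · intro hM
      obtain ⟨q, hq, _⟩ := row0_unique ((hmemF M).mp hM)
      exact ⟨q, hM, hq⟩
    · rintro ⟨q, hM, _⟩; exact hM
  have hdisj : Set.PairwiseDisjoint (↑(Finset.univ : Finset (Fin (m+1))))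
      (fun q => F.filter (fun M => M 0 q = 1)) := by
    intro q1 _ q2 _ hne
    simp only [Function.onFun]
    rw [Finset.disjoint_left]
    intro M hM1 hM2
    rw [Finset.mem_filter] at hM1 hM2
    obtain ⟨q, _, hq0⟩ := row0_unique ((hmemF M).mp hM1.1)
    have e1 : q1 = q := by
      by_contra h; rw [hq0 q1 h] at hM1; exact absurd hM1.2 (by norm_num)
    have e2 : q2 = q := by
      by_contra h; rw [hq0 q2 h] at hM2; exact absurd hM2.2 (by norm_num)
    exact hne (e1.trans e2.symm)
  rw [hcover, Finset.sum_biUnion hdisj]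
  have hinner : ∀ q : Fin (m+1),
      (∑ M ∈ F.filter (fun M => M 0 q = 1), wtASM M x (fun _ => 0))
      = ((F.filter (fun M => M 0 q = 1)).card : ℝ) * (aw u ^ (q:ℕ) * bw u ^ (m - (q:ℕ))) := by
    intro q
    have hw : ∀ M ∈ F.filter (fun M => M 0 q = 1),
        wtASM M x (fun _ => 0) = aw u ^ (q:ℕ) * bw u ^ (m - (q:ℕ)) := by
      intro M hM
      rw [Finset.mem_filter] at hM
      have hASM : IsASM M := (hmemF M).mp hM.1
      obtain ⟨q', hq', hq'0⟩ := row0_unique hASM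
      have heq : q' = q := by
        by_contra h
        rw [hq'0 q (fun he => h he.symm)] at hM
        exact absurd hM.2 (by norm_num)
      subst heq
      exact wt_row hASM hq' hq'0 u
    rw [Finset.sum_congr rfl hw, Finset.sum_const, nsmul_eq_mul]
  have hcard : ∀ q : Fin (m+1),
      (F.filter (fun M => M 0 q = 1)).card = Ank (m+1) (((q:ℕ) : ℤ) + 1) := by
    intro q
    rw [Ank]
    have hset : {M : Matrix (Fin (m+1)) (Fin (m+1)) ℤ | IsASM M ∧ HasOneAt M 1 (((q:ℕ) : ℤ) + 1)}
        = ↑(F.filter (fun M => M 0 q = 1)) := by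
      ext M
      simp only [Set.mem_setOf_eq, Finset.coe_filter, Set.mem_setOf_eq, hmemF]
      constructor
      · rintro ⟨hASM, p, r, hp, hr, h1⟩
        refine ⟨hASM, ?_⟩
        have hp0 : p = 0 := by
          have : (p : ℕ) = 0 := by exact_mod_cast (by omega : ((p:ℕ):ℤ) = 0)
          exact Fin.ext this
        have hrq : r = q := by
          have : (r : ℕ) = (q : ℕ) := by exact_mod_cast (by omega : ((r:ℕ):ℤ) = ((q:ℕ):ℤ))
          exact Fin.ext this
        rw [← hp0, ← hrq]; exact h1
      · rintro ⟨hASM, h1⟩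
        exact ⟨hASM, 0, q, by simp, rfl, h1⟩
    rw [hset, Set.ncard_coe_finset]
  calc (∑ q : Fin (m+1), ∑ M ∈ F.filter (fun M => M 0 q = 1), wtASM M x (fun _ => 0))
      = ∑ q : Fin (m+1), (Ank (m+1) (((q:ℕ) : ℤ) + 1) : ℝ) * (aw u ^ (q:ℕ) * bw u ^ (m - (q:ℕ))) := by
        apply Finset.sum_congr rfl
        intro q _
        rw [hinner q, hcard q]
    _ = ∑ i ∈ Finset.range (m+1), (Ank (m+1) ((i : ℤ) + 1) : ℝ) * (aw u ^ i * bw u ^ (m - i)) := by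
        exact Fin.sum_univ_eq_sum_range
          (fun i => (Ank (m+1) ((i : ℤ) + 1) : ℝ) * (aw u ^ i * bw u ^ (m - i))) (m+1)
    _ = ∑ k ∈ Finset.Icc 1 (m+1), (Ank (m+1) (k : ℤ) : ℝ) * aw u ^ (k - 1) * bw u ^ (m + 1 - k) := by
        rw [← Finset.Ico_add_one_right_eq_Icc, Finset.sum_Ico_eq_sum_range]
        apply Finset.sum_congr (by norm_num)
        intro i hi
        have h1 : ((1 + i : ℕ) : ℤ) = (i : ℤ) + 1 := by push_cast; ring
        have h2 : (1 + i) - 1 = i := by omega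
        have h3 : m + 1 - (1 + i) = m - i := by omega
        rw [h1, h2, h3, mul_assoc]
end
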